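/- If a space X satisfies S_1(G_K, G), then for every sequence (U_n : n in N) of G_K-covers of X there is a sequence (V_n : n in N) such that each V_n is a subset of U_n of cardinality at most n, and every x in X belongs to the union of V_n for all but finitely many n. -/

import Mathlib

open Set Filter

def GKCover (X : Type*) [TopologicalSpace X] (U : Set (Set X)) : Prop :=
  (∀ u ∈ U, IsGδ u) ∧ univ ∉ U ∧ ∀ K : Set X, IsCompact K → ∃ u ∈ U, K ⊆ u

def S1GKG (X : Type*) [TopologicalSpace X] : Prop :=
  ∀ U : ℕ → Set (Set X), (∀ n, GKCover X (U n)) →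
    ∃ f : ℕ → Set X, (∀ n, f n ∈ U n) ∧ (⋃ n, f n) = univ

theorem S1GKG_small_finite_selections (X : Type*) [TopologicalSpace X]
    (h : S1GKG X) (U : ℕ → Set (Set X)) (hU : ∀ n, GKCover X (U n)) :
    ∃ V : ℕ → Set (Set X),
      (∀ n, V n ⊆ U n ∧ (V n).Finite ∧ (V n).ncard ≤ n) ∧
      ∀ x : X, ∀ᶠ n in atTop, x ∈ ⋃₀ V n := by
  classical
  set W : ℕ → Set (Set X) := fun k =>
    { s | ∃ g : ℕ → Set X, (∀ i, g i ∈ U i) ∧ s = ⋂ i, g (k + i) } with hWdef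
  have hWcov : ∀ k, GKCover X (W k) := by
    intro k
    refine ⟨?_, ?_, ?_⟩
    · rintro u ⟨g, hg, rfl⟩
      exact IsGδ.iInter fun i => (hU (k + i)).1 _ (hg _)
    · rintro ⟨g, hg, hgu⟩
      have hsub : (univ : Set X) ⊆ g (k + 0) := by
        rw [hgu]; exact iInter_subset _ 0
      have : g (k + 0) = univ := eq_univ_of_univ_subset hsub
      exact (hU (k + 0)).2.1 (this ▸ hg (k + 0))
    · intro K hK
      choose u hu hKu using fun i => (hU i).2.2 K hK
      exact ⟨⋂ i, u (k + i), ⟨u, hu, rfl⟩, subset_iInter fun i => hKu _⟩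
  obtain ⟨f, hf, hfcov⟩ := h W hWcov
  choose c hc hfc using hf
  refine ⟨fun n => (fun k => c k n) '' (Set.Iio n), ?_, ?_⟩
  · intro n
    refine ⟨?_, (finite_Iio n).image _, ?_⟩
    · rintro _ ⟨k, _, rfl⟩; exact hc k n
    · calc ((fun k => c k n) '' Iio n).ncard ≤ (Iio n).ncard :=
            ncard_image_le (finite_Iio n)
        _ = n := by
            rw [show (Iio n : Set ℕ) = ↑(Finset.Iio n) by simp, ncard_coe_finset]
            simp
  · intro x
    have hx : x ∈ ⋃ k, f k := hfcov ▸ mem_univ x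
    obtain ⟨k, hk⟩ := mem_iUnion.mp hx
    rw [hfc k] at hk
    filter_upwards [eventually_ge_atTop (k + 1)] with n hn
    refine ⟨c k n, ⟨k, by simpa using by omega, rfl⟩, ?_⟩
    have hm := mem_iInter.mp hk (n - k)
    rwa [Nat.add_sub_cancel' (by omega)] at hm
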